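/- Let E ∈ ℂ^{n×n} be Hermitian, F ∈ ℂ^{m×n}, G ∈ ℂ^{m×m}, q ∈ ℂⁿ, r ∈ ℂᵐ, û ∈ ℂⁿ, p̂ ∈ ℂᵐ, and fix positive weights α₁, α₂, α₃, β₁, β₂. With Q = q − Eû − F*p̂, R = r − Fû − Gp̂, and the matrices X₁, X₂, I₁, I₂ (built from N₁ = J_S^n Φ_E D_{S,n}⁻¹, N₂ = J_SK^n Ψ_E D_{SK,n}⁻¹, Σ_F, Σ_G as follows: X₁ = [X̂₁, 0_{2n×2m²}] with X̂₁ = [[α₁⁻¹(ℜ(û)ᵀ⊗Iₙ)N₁, −α₁⁻¹(ℑ(û)ᵀ⊗Iₙ)N₂, α₂⁻¹(Iₙ⊗ℜ(p̂)ᵀ)Σ_F, α₂⁻¹(Iₙ⊗ℑ(p̂)ᵀ)Σ_F],[α₁⁻¹(ℑ(û)ᵀ⊗Iₙ)N₁, α₁⁻¹(ℜ(û)ᵀ⊗Iₙ)N₂, α₂⁻¹(Iₙ⊗ℑ(p̂)ᵀ)Σ_F, −α₂⁻¹(Iₙ⊗ℜ(p̂)ᵀ)Σ_F]], X₂ = [0_{2m×n²},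 X̂₂] with X̂₂ = [[α₂⁻¹(ℜ(û)ᵀ⊗I_m)Σ_F, −α₂⁻¹(ℑ(û)ᵀ⊗I_m)Σ_F, α₃⁻¹(ℜ(p̂)ᵀ⊗I_m)Σ_G, −α₃⁻¹(ℑ(p̂)ᵀ⊗I_m)Σ_G],[α₂⁻¹(ℑ(û)ᵀ⊗I_m)Σ_F, α₂⁻¹(ℜ(û)ᵀ⊗I_m)Σ_F, α₃⁻¹(ℑ(p̂)ᵀ⊗I_m)Σ_G, α₃⁻¹(ℜ(p̂)ᵀ⊗I_m)Σ_G]], I₁ = [−β₁⁻¹I_{2n}, 0_{2n×2m}], I₂ = [0_{2m×2n}, −β₂⁻¹I_{2m}]): for any ΔE ∈ ℂ^{n×n} Hermitian, ΔF ∈ ℂ^{m×n}, ΔG ∈ ℂ^{m×m}, Δq ∈ ℂⁿ, Δr ∈ ℂᵐ, define ΔY = [α₁ D_{S,n} vec_S(ℜ(ΔE⊙Θ_E)); α₁ D_{SK,n} vec_SK(ℑ(ΔE⊙Θ_E)); α₂ vec(ℜ(ΔF⊙Θ_F)); α₂ vec(ℑ(ΔF⊙Θ_F)); α₃ vec(ℜ(ΔG⊙Θ_G));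 α₃ vec(ℑ(ΔG⊙Θ_G))] and ΔZ = [β₁ℜ(Δq); β₁ℑ(Δq); β₂ℜ(Δr); β₂ℑ(Δr)]. Then (a) ζ^{σ₁}(ΔE⊙Θ_E, ΔF⊙Θ_F, ΔG⊙Θ_G, Δq, Δr) = ‖[ΔY; ΔZ]‖₂, and (b) the equations (E+ΔE⊙Θ_E)û + (F+ΔF⊙Θ_F)*p̂ = q+Δq and (F+ΔF⊙Θ_F)û + (G+ΔG⊙Θ_G)p̂ = r+Δr hold if and only if [[X₁, I₁],[X₂, I₂]]·[ΔY; ΔZ] = [ℜ(Q); ℑ(Q); ℜ(R); ℑ(R)]. -/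

import Mathlib

open Matrix

noncomputable section

namespace GSPPBE

/-- Entrywise real part of a complex matrix. -/
def reM {I J : Type*} (A : Matrix I J ℂ) : Matrix I J ℝ := A.map Complex.re

/-- Entrywise imaginary part of a complex matrix. -/
def imM {I J : Type*} (A : Matrix I J ℂ) : Matrix I J ℝ := A.map Complex.im

/-- Entrywise real part of a complex vector. -/
def reV {I : Type*} (v : I → ℂ) : I → ℝ := fun i => (v i).re

/-- Entrywise imaginary part of a complex vector. -/
def imV {I : Type*} (v : I → ℂ) : I → ℝ := fun i => (v i).im

/-- Frobenius norm of a matrix. -/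
def frob {I J α : Type*} [Fintype I] [Fintype J] [SeminormedAddGroup α]
    (A : Matrix I J α) : ℝ :=
  Real.sqrt (∑ i, ∑ j, ‖A i j‖ ^ 2)

/-- Euclidean norm of a (finitely indexed) vector. -/
def eunorm {I α : Type*} [Fintype I] [SeminormedAddGroup α] (v : I → α) : ℝ :=
  Real.sqrt (∑ i, ‖v i‖ ^ 2)

/-- Column-major vectorization: `vecM A (j, i) = A i j`. -/
def vecM {I J α : Type*} (A : Matrix I J α) : J × I → α := fun p => A p.2 p.1

/-- Index type for the lower triangle including the diagonal (positions of `vec_S`);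
it has `m(m+1)/2` elements. -/
abbrev SymIdx (m : ℕ) := {p : Fin m × Fin m // p.2 ≤ p.1}

/-- Index type for the strictly lower triangle (positions of `vec_SK`);
it has `m(m-1)/2` elements. -/
abbrev SkewIdx (m : ℕ) := {p : Fin m × Fin m // p.2 < p.1}

/-- `vec_S` of a (symmetric) matrix: its lower-triangular entries `Z i j`, `j ≤ i`. -/
def vecS {m : ℕ} {α : Type*} (Z : Matrix (Fin m) (Fin m) α) : SymIdx m → α :=
  fun p => Z p.1.1 p.1.2

/-- `vec_SK` of a (skew-symmetric) matrix: its strictly lower-triangular entries `Z i j`, `j < i`. -/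
def vecSK {m : ℕ} {α : Type*} (Z : Matrix (Fin m) (Fin m) α) : SkewIdx m → α :=
  fun p => Z p.1.1 p.1.2

/-- `J_S^m`: its column at position `(i,j)`, `j ≤ i`, is `vec(eᵢeⱼᵀ + eⱼeᵢᵀ)` for `i > j` and
`vec(eⱼeⱼᵀ)` for `i = j`.  Rows are vec positions `(column, row)`. -/
def JS (m : ℕ) : Matrix (Fin m × Fin m) (SymIdx m) ℝ :=
  Matrix.of fun cr p =>
    (if cr.2 = p.1.1 ∧ cr.1 = p.1.2 then (1 : ℝ) else 0) +
    (if p.1.1 ≠ p.1.2 ∧ cr.2 = p.1.2 ∧ cr.1 = p.1.1 then 1 else 0)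

/-- `J_SK^m`: its column at position `(i,j)`, `j < i`, is `vec(eᵢeⱼᵀ − eⱼeᵢᵀ)`. -/
def JSK (m : ℕ) : Matrix (Fin m × Fin m) (SkewIdx m) ℝ :=
  Matrix.of fun cr p =>
    (if cr.2 = p.1.1 ∧ cr.1 = p.1.2 then (1 : ℝ) else 0) -
    (if cr.2 = p.1.2 ∧ cr.1 = p.1.1 then 1 else 0)

open Classical in
/-- Sign pattern `Θ_X` of a matrix, with values in the same ring. -/
def theta {I J α : Type*} [Zero α] [One α] (X : Matrix I J α) : Matrix I J α :=
  Matrix.of fun i j => if X i j = 0 then 0 else 1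

open Classical in
/-- Real-valued sign pattern `Θ_X` of a matrix. -/
def thetaR {I J α : Type*} [Zero α] (X : Matrix I J α) : Matrix I J ℝ :=
  Matrix.of fun i j => if X i j = 0 then 0 else 1

/-- `Φ_X = diag(vec_S(Θ_X))`. -/
def Phi {m : ℕ} {α : Type*} [Zero α] (X : Matrix (Fin m) (Fin m) α) :
    Matrix (SymIdx m) (SymIdx m) ℝ :=
  Matrix.diagonal (vecS (thetaR X))

/-- `Ψ_X`: diagonal matrix listing the strictly lower-triangular entries of `Θ_X`
in `vec_SK` ordering. -/
def Psi {m : ℕ} {α : Type*} [Zero α] (X : Matrix (Fin m) (Fin m) α) :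
    Matrix (SkewIdx m) (SkewIdx m) ℝ :=
  Matrix.diagonal (vecSK (thetaR X))

/-- `Σ_X = diag(vec(Θ_X))`. -/
def Sig {I J α : Type*} [DecidableEq I] [DecidableEq J] [Zero α]
    (X : Matrix I J α) : Matrix (J × I) (J × I) ℝ :=
  Matrix.diagonal (vecM (thetaR X))

/-- `D_{S,m}`: diagonal entry `1` at the positions of diagonal entries `(j,j)`, `√2` elsewhere. -/
def DS (m : ℕ) : Matrix (SymIdx m) (SymIdx m) ℝ :=
  Matrix.diagonal fun p => if p.1.1 = p.1.2 then 1 else Real.sqrt 2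

/-- `D_{SK,m} = √2·I`. -/
def DSK (m : ℕ) : Matrix (SkewIdx m) (SkewIdx m) ℝ :=
  Matrix.diagonal fun _ => Real.sqrt 2

/-- `uᵀ ⊗ I_b`, viewed as a matrix acting on column-major vectorizations of `b×a` matrices. -/
def rowKronId {a b : ℕ} (u : Fin a → ℝ) : Matrix (Fin b) (Fin a × Fin b) ℝ :=
  Matrix.of fun r p => u p.1 * (if r = p.2 then 1 else 0)

/-- `I_a ⊗ vᵀ`, viewed as a matrix acting on column-major vectorizations of `b×a` matrices. -/
def idKronRow {a b : ℕ} (v : Fin b → ℝ) : Matrix (Fin a) (Fin a × Fin b) ℝ :=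
  Matrix.of fun r p => (if r = p.1 then 1 else 0) * v p.2

/-- The weighted norm `ζ^{σ₁}(A,B,C,q,r)`. -/
def zeta1 {n m : ℕ} {α : Type*} [SeminormedAddGroup α]
    (α₁ α₂ α₃ β₁ β₂ : ℝ)
    (A : Matrix (Fin n) (Fin n) α) (B : Matrix (Fin m) (Fin n) α)
    (C : Matrix (Fin m) (Fin m) α) (q : Fin n → α) (r : Fin m → α) : ℝ :=
  Real.sqrt (α₁ ^ 2 * frob A ^ 2 + α₂ ^ 2 * frob B ^ 2 + α₃ ^ 2 * frob C ^ 2 +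
    β₁ ^ 2 * eunorm q ^ 2 + β₂ ^ 2 * eunorm r ^ 2)

/-- The weighted norm `ζ^{σ₂}(A,B,H,C,q,r)`. -/
def zeta2 {n m : ℕ} {α : Type*} [SeminormedAddGroup α]
    (α₁ α₂ α₃ α₄ β₁ β₂ : ℝ)
    (A : Matrix (Fin n) (Fin n) α) (B : Matrix (Fin m) (Fin n) α)
    (H : Matrix (Fin m) (Fin n) α) (C : Matrix (Fin m) (Fin m) α)
    (q : Fin n → α) (r : Fin m → α) : ℝ :=
  Real.sqrt (α₁ ^ 2 * frob A ^ 2 + α₂ ^ 2 * frob B ^ 2 + α₃ ^ 2 * frob H ^ 2 +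
    α₄ ^ 2 * frob C ^ 2 + β₁ ^ 2 * eunorm q ^ 2 + β₂ ^ 2 * eunorm r ^ 2)

-- helpers
lemma DS_inv_eq {n : ℕ} : (DS n)⁻¹ =
    Matrix.diagonal (fun p : SymIdx n => (if p.1.1 = p.1.2 then 1 else Real.sqrt 2)⁻¹) := by
  apply Matrix.inv_eq_right_inv
  rw [DS, Matrix.diagonal_mul_diagonal]
  convert Matrix.diagonal_one with p
  rw [mul_inv_cancel₀]
  split_ifs with h
  · norm_num
  · positivity

lemma DS_inv_mulVec {n : ℕ} (x : SymIdx n → ℝ) : (DS n)⁻¹ *ᵥ (DS n *ᵥ x) = x := by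
  rw [DS_inv_eq, DS]
  ext p
  simp only [mulVec_diagonal]
  rw [inv_mul_cancel_left₀]
  split_ifs with h
  · norm_num
  · positivity

lemma DSK_inv_mulVec {n : ℕ} (x : SkewIdx n → ℝ) : (DSK n)⁻¹ *ᵥ (DSK n *ᵥ x) = x := by
  have h2 : (Real.sqrt 2) ≠ 0 := by positivity
  have : (DSK n)⁻¹ = Matrix.diagonal (fun _ : SkewIdx n => (Real.sqrt 2)⁻¹) := by
    apply Matrix.inv_eq_right_inv
    rw [DSK, Matrix.diagonal_mul_diagonal]
    convert Matrix.diagonal_one with p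
    exact mul_inv_cancel₀ h2
  rw [this, DSK]
  ext p
  simp only [mulVec_diagonal]
  rw [inv_mul_cancel_left₀ h2]

lemma Phi_mulVec_vecS {n : ℕ} (E : Matrix (Fin n) (Fin n) ℂ) (S : Matrix (Fin n) (Fin n) ℝ)
    (hmask : ∀ i j, E i j = 0 → S i j = 0) : Phi E *ᵥ vecS S = vecS S := by
  ext p
  simp only [Phi, mulVec_diagonal, vecS, thetaR, Matrix.of_apply]
  split_ifs with h
  · simp [hmask _ _ h]
  · ring

lemma Psi_mulVec_vecSK {n : ℕ} (E : Matrix (Fin n) (Fin n) ℂ) (S : Matrix (Fin n) (Fin n) ℝ)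
    (hmask : ∀ i j, E i j = 0 → S i j = 0) : Psi E *ᵥ vecSK S = vecSK S := by
  ext p
  simp only [Psi, mulVec_diagonal, vecSK, thetaR, Matrix.of_apply]
  split_ifs with h
  · simp [hmask _ _ h]
  · ring

lemma Sig_mulVec_vecM {a b : ℕ} (F : Matrix (Fin b) (Fin a) ℂ) (B : Matrix (Fin b) (Fin a) ℝ)
    (hmask : ∀ i j, F i j = 0 → B i j = 0) : Sig F *ᵥ vecM B = vecM B := by
  ext p
  simp only [Sig, mulVec_diagonal, vecM, thetaR, Matrix.of_apply]
  split_ifs with h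
  · simp [hmask _ _ h]
  · ring


lemma JS_mulVec_vecS {n : ℕ} (S : Matrix (Fin n) (Fin n) ℝ) (hS : ∀ i j, S j i = S i j) :
    JS n *ᵥ vecS S = vecM S := by
  ext cr
  obtain ⟨c, r⟩ := cr
  simp only [mulVec, dotProduct, JS, vecS, vecM, Matrix.of_apply]
  rcases le_or_gt c r with h | h
  · rw [Finset.sum_eq_single (⟨(r, c), h⟩ : SymIdx n)]
    · have h2 : ¬((r : Fin n) ≠ c ∧ r = c ∧ c = r) := by rintro ⟨hne, h1, _⟩; exact hne h1
      rw [if_pos ⟨rfl, rfl⟩, if_neg h2]; ring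
    · intro p _ hp
      have h1 : ¬(r = p.1.1 ∧ c = p.1.2) := by
        rintro ⟨h1, h2⟩
        exact hp (Subtype.ext (Prod.ext h1.symm h2.symm))
      have h2 : ¬(p.1.1 ≠ p.1.2 ∧ r = p.1.2 ∧ c = p.1.1) := by
        rintro ⟨hne, h1, h2⟩
        have : r = c := le_antisymm (h1 ▸ h2 ▸ p.2) h
        exact hne (h2 ▸ h1 ▸ this ▸ rfl)
      rw [if_neg h1, if_neg h2]; ring
    · intro habs; exact absurd (Finset.mem_univ _) habs
  · rw [Finset.sum_eq_single (⟨(c, r), h.le⟩ : SymIdx n)]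
    · have : ¬(r = c ∧ c = r) := fun ⟨h1, _⟩ => absurd h1 h.ne
      rw [if_neg this, if_pos ⟨h.ne', rfl, rfl⟩, hS]
      ring
    · intro p _ hp
      have h1 : ¬(r = p.1.1 ∧ c = p.1.2) := by
        rintro ⟨h1, h2⟩
        exact absurd (h1 ▸ h2 ▸ p.2) (not_le.mpr h)
      have h2 : ¬(p.1.1 ≠ p.1.2 ∧ r = p.1.2 ∧ c = p.1.1) := by
        rintro ⟨hne, h1, h2⟩
        exact hp (Subtype.ext (Prod.ext h2.symm h1.symm))
      rw [if_neg h1, if_neg h2]; ring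
    · intro habs; exact absurd (Finset.mem_univ _) habs

lemma JSK_mulVec_vecSK {n : ℕ} (K : Matrix (Fin n) (Fin n) ℝ) (hK : ∀ i j, K j i = -K i j) :
    JSK n *ᵥ vecSK K = vecM K := by
  have hdiag : ∀ i, K i i = 0 := fun i => by have := hK i i; linarith
  ext cr
  obtain ⟨c, r⟩ := cr
  simp only [mulVec, dotProduct, JSK, vecSK, vecM, Matrix.of_apply]
  rcases lt_trichotomy c r with h | h | h
  · rw [Finset.sum_eq_single (⟨(r, c), h⟩ : SkewIdx n)]
    · have : ¬(r = c ∧ c = r) := fun ⟨h1, _⟩ => absurd h1 h.ne'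
      rw [if_pos ⟨rfl, rfl⟩, if_neg this]; ring
    · intro p _ hp
      have h1 : ¬(r = p.1.1 ∧ c = p.1.2) := by
        rintro ⟨h1, h2⟩
        exact hp (Subtype.ext (Prod.ext h1.symm h2.symm))
      have h2 : ¬(r = p.1.2 ∧ c = p.1.1) := by
        rintro ⟨h1, h2⟩
        exact absurd (h1 ▸ h2 ▸ p.2) (not_lt.mpr h.le)
      rw [if_neg h1, if_neg h2]; ring
    · intro habs; exact absurd (Finset.mem_univ _) habs
  · subst h
    rw [Finset.sum_eq_zero, hdiag]
    intro p _
    have h1 : ¬(c = p.1.1 ∧ c = p.1.2) := by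
      rintro ⟨h1, h2⟩
      exact absurd (h1 ▸ h2 ▸ p.2) (lt_irrefl _)
    have h2 : ¬(c = p.1.2 ∧ c = p.1.1) := by
      rintro ⟨h1, h2⟩
      exact absurd (h1 ▸ h2 ▸ p.2) (lt_irrefl _)
    rw [if_neg h1, if_neg h2]; ring
  · rw [Finset.sum_eq_single (⟨(c, r), h⟩ : SkewIdx n)]
    · have : ¬(r = c ∧ c = r) := fun ⟨h1, _⟩ => absurd h1 h.ne
      rw [if_neg this, if_pos ⟨rfl, rfl⟩, hK]
      ring
    · intro p _ hp
      have h1 : ¬(r = p.1.1 ∧ c = p.1.2) := by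
        rintro ⟨h1, h2⟩
        exact absurd (h1 ▸ h2 ▸ p.2) (not_lt.mpr h.le)
      have h2 : ¬(r = p.1.2 ∧ c = p.1.1) := by
        rintro ⟨h1, h2⟩
        exact hp (Subtype.ext (Prod.ext h2.symm h1.symm))
      rw [if_neg h1, if_neg h2]; ring
    · intro habs; exact absurd (Finset.mem_univ _) habs

lemma rowKronId_mulVec_vecM {a b : ℕ} (u : Fin a → ℝ) (A : Matrix (Fin b) (Fin a) ℝ) :
    rowKronId u *ᵥ vecM A = A *ᵥ u := by
  ext r
  simp only [rowKronId, mulVec, dotProduct, vecM, Matrix.of_apply, Fintype.sum_prod_type,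
    mul_ite, mul_one, mul_zero, ite_mul, zero_mul]
  rw [Finset.sum_comm]
  simp [mul_comm]

lemma idKronRow_mulVec_vecM {a b : ℕ} (v : Fin b → ℝ) (A : Matrix (Fin b) (Fin a) ℝ) :
    idKronRow v *ᵥ vecM A = Aᵀ *ᵥ v := by
  ext r
  simp only [idKronRow, mulVec, dotProduct, vecM, Matrix.of_apply, Fintype.sum_prod_type,
    mul_ite, mul_one, mul_zero, ite_mul, zero_mul, one_mul, transpose_apply]
  simp [mul_comm]


lemma inv_smul_mulVec {I J : Type*} [Fintype J] (c : ℝ) (hc : c ≠ 0)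
    (M : Matrix I J ℝ) (v : J → ℝ) : (c⁻¹ • M) *ᵥ (c • v) = M *ᵥ v := by
  rw [Matrix.smul_mulVec, Matrix.mulVec_smul, smul_smul, inv_mul_cancel₀ hc, one_smul]

lemma neg_inv_smul_mulVec {I J : Type*} [Fintype J] (c : ℝ) (hc : c ≠ 0)
    (M : Matrix I J ℝ) (v : J → ℝ) : ((-(c⁻¹)) • M) *ᵥ (c • v) = -(M *ᵥ v) := by
  rw [Matrix.smul_mulVec, Matrix.mulVec_smul, smul_smul, neg_mul,
    inv_mul_cancel₀ hc, neg_smul, one_smul]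

lemma reV_mulVec {I J : Type*} [Fintype J] (A : Matrix I J ℂ) (u : J → ℂ) :
    reV (A *ᵥ u) = reM A *ᵥ reV u - imM A *ᵥ imV u := by
  ext i
  simp [reV, reM, imM, imV, mulVec, dotProduct, Complex.re_sum, Complex.mul_re,
    Finset.sum_sub_distrib]

lemma imV_mulVec {I J : Type*} [Fintype J] (A : Matrix I J ℂ) (u : J → ℂ) :
    imV (A *ᵥ u) = reM A *ᵥ imV u + imM A *ᵥ reV u := by
  ext i
  simp [reV, reM, imM, imV, mulVec, dotProduct, Complex.im_sum, Complex.mul_im,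
    Finset.sum_add_distrib]

lemma reM_conjTranspose {I J : Type*} (A : Matrix I J ℂ) : reM Aᴴ = (reM A)ᵀ := by
  ext i j; simp [reM, Matrix.conjTranspose_apply]

lemma imM_conjTranspose {I J : Type*} (A : Matrix I J ℂ) : imM Aᴴ = -(imM A)ᵀ := by
  ext i j; simp [imM, Matrix.conjTranspose_apply]

lemma vec_eq_iff {I : Type*} (v w : I → ℂ) : v = w ↔ reV v = reV w ∧ imV v = imV w := by
  constructor
  · rintro rfl; exact ⟨rfl, rfl⟩
  · rintro ⟨h1, h2⟩
    funext i
    exact Complex.ext (congrFun h1 i) (congrFun h2 i)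

lemma elim_eq_iff {a b c : Type*} (f₁ g₁ : a → c) (f₂ g₂ : b → c) :
    Sum.elim f₁ f₂ = Sum.elim g₁ g₂ ↔ f₁ = g₁ ∧ f₂ = g₂ := by
  constructor
  · intro h
    exact ⟨funext fun i => congrFun h (Sum.inl i), funext fun i => congrFun h (Sum.inr i)⟩
  · rintro ⟨rfl, rfl⟩; rfl

def triEquiv (n : ℕ) : (SymIdx n ⊕ SkewIdx n) ≃ (Fin n × Fin n) where
  toFun := Sum.elim (fun p => p.1) (fun p => (p.1.2, p.1.1))
  invFun := fun q => if h : q.2 ≤ q.1 then Sum.inl ⟨q, h⟩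
    else Sum.inr ⟨(q.2, q.1), lt_of_not_ge h⟩
  left_inv := by
    rintro (p | p)
    · simp only [Sum.elim_inl]; exact dif_pos p.2
    · have : ¬((p.1.2, p.1.1).2 ≤ (p.1.2, p.1.1).1) := not_le.mpr p.2
      simp only [Sum.elim_inr]; exact dif_neg (not_le.mpr p.2)
  right_inv := by
    intro q
    by_cases h : q.2 ≤ q.1
    · simp only [dif_pos h, Sum.elim_inl]
    · simp only [dif_neg h, Sum.elim_inr]

lemma sum_split {n : ℕ} (f : Fin n × Fin n → ℝ) :
    ∑ q : Fin n × Fin n, f q =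
      ∑ p : SymIdx n, f p.1 + ∑ p : SkewIdx n, f (p.1.2, p.1.1) := by
  rw [← Equiv.sum_comp (triEquiv n) f, Fintype.sum_sum_type]
  rfl

lemma sum_symIdx_eq_skew {n : ℕ} (f : SymIdx n → ℝ)
    (hf : ∀ p : SymIdx n, p.1.1 = p.1.2 → f p = 0) :
    ∑ p : SymIdx n, f p = ∑ q : SkewIdx n, f ⟨q.1, q.2.le⟩ := by
  classical
  have hinj : ∀ x ∈ (Finset.univ : Finset (SkewIdx n)), ∀ y ∈ (Finset.univ : Finset (SkewIdx n)),
      (fun q : SkewIdx n => (⟨q.1, q.2.le⟩ : SymIdx n)) x =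
        (fun q : SkewIdx n => (⟨q.1, q.2.le⟩ : SymIdx n)) y → x = y := by
    intro a _ b _ hab
    exact Subtype.ext (by simpa using congrArg Subtype.val hab)
  rw [← Finset.sum_image hinj]
  symm
  apply Finset.sum_subset (Finset.subset_univ _)
  intro p _ hp
  apply hf
  by_contra hne
  have hlt : p.1.2 < p.1.1 := lt_of_le_of_ne p.2 (fun h => hne h.symm)
  exact hp (Finset.mem_image.mpr ⟨⟨p.1, hlt⟩, Finset.mem_univ _, Subtype.ext rfl⟩)

lemma frob_sq_symm {n : ℕ} (S : Matrix (Fin n) (Fin n) ℝ) (hS : ∀ i j, S j i = S i j) :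
    ∑ i, ∑ j, S i j ^ 2 =
      ∑ p : SymIdx n, ((if p.1.1 = p.1.2 then 1 else Real.sqrt 2) * S p.1.1 p.1.2) ^ 2 := by
  have hR : ∀ p : SymIdx n,
      ((if p.1.1 = p.1.2 then (1 : ℝ) else Real.sqrt 2) * S p.1.1 p.1.2) ^ 2 =
        S p.1.1 p.1.2 ^ 2 + (if p.1.1 = p.1.2 then 0 else S p.1.1 p.1.2 ^ 2) := by
    intro p
    split_ifs with h
    · ring
    · rw [mul_pow, Real.sq_sqrt (by norm_num : (2:ℝ) ≥ 0)]; ring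
  calc ∑ i, ∑ j, S i j ^ 2 = ∑ q : Fin n × Fin n, S q.1 q.2 ^ 2 := by
        rw [Fintype.sum_prod_type]
    _ = ∑ p : SymIdx n, S p.1.1 p.1.2 ^ 2 + ∑ p : SkewIdx n, S p.1.2 p.1.1 ^ 2 :=
        sum_split _
    _ = ∑ p : SymIdx n, S p.1.1 p.1.2 ^ 2 +
        ∑ p : SymIdx n, (if p.1.1 = p.1.2 then 0 else S p.1.1 p.1.2 ^ 2) := by
        congr 1
        rw [sum_symIdx_eq_skew (fun p => if p.1.1 = p.1.2 then 0 else S p.1.1 p.1.2 ^ 2)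
          (fun p h => if_pos h)]
        refine Finset.sum_congr rfl fun q _ => ?_
        rw [if_neg q.2.ne', hS]
    _ = _ := by
        rw [← Finset.sum_add_distrib]
        exact Finset.sum_congr rfl fun p _ => (hR p).symm

lemma frob_sq_skew {n : ℕ} (K : Matrix (Fin n) (Fin n) ℝ) (hK : ∀ i j, K j i = -K i j) :
    ∑ i, ∑ j, K i j ^ 2 = ∑ p : SkewIdx n, (Real.sqrt 2 * K p.1.1 p.1.2) ^ 2 := by
  have hdiag : ∀ i, K i i = 0 := fun i => by have := hK i i; linarith
  calc ∑ i, ∑ j, K i j ^ 2 = ∑ q : Fin n × Fin n, K q.1 q.2 ^ 2 := by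
        rw [Fintype.sum_prod_type]
    _ = ∑ p : SymIdx n, K p.1.1 p.1.2 ^ 2 + ∑ p : SkewIdx n, K p.1.2 p.1.1 ^ 2 :=
        sum_split _
    _ = ∑ p : SkewIdx n, K p.1.1 p.1.2 ^ 2 + ∑ p : SkewIdx n, K p.1.1 p.1.2 ^ 2 := by
        congr 1
        · exact sum_symIdx_eq_skew (fun p => K p.1.1 p.1.2 ^ 2)
            (fun p h => by show K p.1.1 p.1.2 ^ 2 = 0; rw [h, hdiag]; ring)
        · refine Finset.sum_congr rfl fun q _ => ?_
          rw [hK]; ring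
    _ = _ := by
        rw [← Finset.sum_add_distrib]
        refine Finset.sum_congr rfl fun p _ => ?_
        rw [mul_pow, Real.sq_sqrt (by norm_num : (2:ℝ) ≥ 0)]
        ring


lemma cnorm_sq (z : ℂ) : ‖z‖ ^ 2 = z.re ^ 2 + z.im ^ 2 := by
  rw [Complex.sq_norm, Complex.normSq_apply]; ring

lemma reV_add {I : Type*} (v w : I → ℂ) : reV (v + w) = reV v + reV w := by
  ext i; simp [reV]
lemma reV_sub {I : Type*} (v w : I → ℂ) : reV (v - w) = reV v - reV w := by
  ext i; simp [reV]
lemma imV_add {I : Type*} (v w : I → ℂ) : imV (v + w) = imV v + imV w := by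
  ext i; simp [imV]
lemma imV_sub {I : Type*} (v w : I → ℂ) : imV (v - w) = imV v - imV w := by
  ext i; simp [imV]

lemma elim_smul {a b c : Type*} [SMul ℝ c] (r : ℝ) (f : a → c) (g : b → c) :
    Sum.elim (r • f) (r • g) = r • Sum.elim f g := by
  funext x; rcases x with x | x <;> rfl

lemma red_pos {I J : Type*} [Fintype J] (c : ℝ) (hc : c ≠ 0) (P : Matrix I J ℝ)
    (x : J → ℝ) (y : I → ℝ) (h : P *ᵥ x = y) : (c⁻¹ • P) *ᵥ (c • x) = y := by
  rw [inv_smul_mulVec c hc, h]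

lemma red_neg {I J : Type*} [Fintype J] (c : ℝ) (hc : c ≠ 0) (P : Matrix I J ℝ)
    (x : J → ℝ) (y : I → ℝ) (h : P *ᵥ x = y) : ((-(c⁻¹)) • P) *ᵥ (c • x) = -y := by
  rw [neg_inv_smul_mulVec c hc, h]

lemma coreS {n : ℕ} (E : Matrix (Fin n) (Fin n) ℂ) (S : Matrix (Fin n) (Fin n) ℝ)
    (hS : ∀ i j, S j i = S i j) (hmask : ∀ i j, E i j = 0 → S i j = 0) (u : Fin n → ℝ) :
    (rowKronId u * (JS n * Phi E * (DS n)⁻¹)) *ᵥ (DS n *ᵥ vecS S) = S *ᵥ u := by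
  have h : rowKronId u *ᵥ (JS n *ᵥ (Phi E *ᵥ ((DS n)⁻¹ *ᵥ (DS n *ᵥ vecS S)))) = S *ᵥ u := by
    rw [DS_inv_mulVec, Phi_mulVec_vecS E S hmask, JS_mulVec_vecS S hS, rowKronId_mulVec_vecM]
  generalize DS n *ᵥ vecS S = w at h ⊢
  simp only [Matrix.mulVec_mulVec] at h
  rw [← Matrix.mul_assoc (JS n)] at h
  exact h

lemma coreK {n : ℕ} (E : Matrix (Fin n) (Fin n) ℂ) (S : Matrix (Fin n) (Fin n) ℝ)
    (hS : ∀ i j, S j i = -S i j) (hmask : ∀ i j, E i j = 0 → S i j = 0) (u : Fin n → ℝ) :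
    (rowKronId u * (JSK n * Psi E * (DSK n)⁻¹)) *ᵥ (DSK n *ᵥ vecSK S) = S *ᵥ u := by
  have h : rowKronId u *ᵥ (JSK n *ᵥ (Psi E *ᵥ ((DSK n)⁻¹ *ᵥ (DSK n *ᵥ vecSK S)))) = S *ᵥ u := by
    rw [DSK_inv_mulVec, Psi_mulVec_vecSK E S hmask, JSK_mulVec_vecSK S hS, rowKronId_mulVec_vecM]
  generalize DSK n *ᵥ vecSK S = w at h ⊢
  simp only [Matrix.mulVec_mulVec] at h
  rw [← Matrix.mul_assoc (JSK n)] at h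
  exact h

lemma coreF {a b : ℕ} (F : Matrix (Fin b) (Fin a) ℂ) (B : Matrix (Fin b) (Fin a) ℝ)
    (hmask : ∀ i j, F i j = 0 → B i j = 0) (u : Fin a → ℝ) :
    (rowKronId u * Sig F) *ᵥ vecM B = B *ᵥ u := by
  have h := Matrix.mulVec_mulVec (vecM B) (rowKronId u) (Sig F)
  rw [Sig_mulVec_vecM F B hmask, rowKronId_mulVec_vecM] at h
  exact h.symm

lemma coreFc {a b : ℕ} (F : Matrix (Fin b) (Fin a) ℂ) (B : Matrix (Fin b) (Fin a) ℝ)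
    (hmask : ∀ i j, F i j = 0 → B i j = 0) (v : Fin b → ℝ) :
    (idKronRow v * Sig F) *ᵥ vecM B = Bᵀ *ᵥ v := by
  have h := Matrix.mulVec_mulVec (vecM B) (idKronRow v) (Sig F)
  rw [Sig_mulVec_vecM F B hmask, idKronRow_mulVec_vecM] at h
  exact h.symm

lemma sum_vecM_sq {a b : ℕ} (X : Matrix (Fin b) (Fin a) ℝ) :
    ∑ p : Fin a × Fin b, (vecM X p) ^ 2 = ∑ i, ∑ j, X i j ^ 2 := by
  rw [Fintype.sum_prod_type]
  rw [Finset.sum_comm]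
  rfl



lemma cnormM_sq {I J : Type*} (A : Matrix I J ℂ) (i : I) (j : J) :
    ‖A i j‖ ^ 2 = reM A i j ^ 2 + imM A i j ^ 2 := by
  rw [Complex.sq_norm, Complex.normSq_apply]
  simp [reM, imM]; ring

lemma cnormV_sq {I : Type*} (v : I → ℂ) (i : I) :
    ‖v i‖ ^ 2 = reV v i ^ 2 + imV v i ^ 2 := by
  rw [Complex.sq_norm, Complex.normSq_apply]
  simp [reV, imV]; ring

/-- for case (i), the weighted norm of the perturbation equals the Euclidean
norm of `[ΔY; ΔZ]`, and the perturbed GSPP equations are equivalent to the real linear system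
`[[X₁, I₁],[X₂, I₂]]·[ΔY; ΔZ] = [ℜQ; ℑQ; ℜR; ℑR]`. -/
theorem structured_BE_case_i_reformulation
    (n m : ℕ) (E : Matrix (Fin n) (Fin n) ℂ) (hE : E.IsHermitian)
    (F : Matrix (Fin m) (Fin n) ℂ) (G : Matrix (Fin m) (Fin m) ℂ)
    (q : Fin n → ℂ) (r : Fin m → ℂ) (uh : Fin n → ℂ) (ph : Fin m → ℂ)
    (α₁ α₂ α₃ β₁ β₂ : ℝ)
    (hα₁ : 0 < α₁) (hα₂ : 0 < α₂) (hα₃ : 0 < α₃) (hβ₁ : 0 < β₁) (hβ₂ : 0 < β₂)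
    (ΔE : Matrix (Fin n) (Fin n) ℂ) (hΔE : ΔE.IsHermitian)
    (ΔF : Matrix (Fin m) (Fin n) ℂ) (ΔG : Matrix (Fin m) (Fin m) ℂ)
    (Δq : Fin n → ℂ) (Δr : Fin m → ℂ) :
    let Q : Fin n → ℂ := q - E *ᵥ uh - Fᴴ *ᵥ ph
    let R : Fin m → ℂ := r - F *ᵥ uh - G *ᵥ ph
    let N₁ := JS n * Phi E * (DS n)⁻¹
    let N₂ := JSK n * Psi E * (DSK n)⁻¹
    let X₁ : Matrix (Fin n ⊕ Fin n)
        ((SymIdx n ⊕ SkewIdx n) ⊕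
          (((Fin n × Fin m) ⊕ (Fin n × Fin m)) ⊕ ((Fin m × Fin m) ⊕ (Fin m × Fin m)))) ℝ :=
      fromCols
        (fromRows
          (fromCols (α₁⁻¹ • (rowKronId (reV uh) * N₁))
            ((-(α₁⁻¹)) • (rowKronId (imV uh) * N₂)))
          (fromCols (α₁⁻¹ • (rowKronId (imV uh) * N₁))
            (α₁⁻¹ • (rowKronId (reV uh) * N₂))))
        (fromCols
          (fromRows
            (fromCols (α₂⁻¹ • (idKronRow (reV ph) * Sig F))
              (α₂⁻¹ • (idKronRow (imV ph) * Sig F)))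
            (fromCols (α₂⁻¹ • (idKronRow (imV ph) * Sig F))
              ((-(α₂⁻¹)) • (idKronRow (reV ph) * Sig F))))
          0)
    let X₂ : Matrix (Fin m ⊕ Fin m)
        ((SymIdx n ⊕ SkewIdx n) ⊕
          (((Fin n × Fin m) ⊕ (Fin n × Fin m)) ⊕ ((Fin m × Fin m) ⊕ (Fin m × Fin m)))) ℝ :=
      fromCols 0
        (fromCols
          (fromRows
            (fromCols (α₂⁻¹ • (rowKronId (reV uh) * Sig F))
              ((-(α₂⁻¹)) • (rowKronId (imV uh) * Sig F)))
            (fromCols (α₂⁻¹ • (rowKronId (imV uh) * Sig F))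
              (α₂⁻¹ • (rowKronId (reV uh) * Sig F))))
          (fromRows
            (fromCols (α₃⁻¹ • (rowKronId (reV ph) * Sig G))
              ((-(α₃⁻¹)) • (rowKronId (imV ph) * Sig G)))
            (fromCols (α₃⁻¹ • (rowKronId (imV ph) * Sig G))
              (α₃⁻¹ • (rowKronId (reV ph) * Sig G)))))
    let I₁ : Matrix (Fin n ⊕ Fin n) ((Fin n ⊕ Fin n) ⊕ (Fin m ⊕ Fin m)) ℝ :=
      fromCols ((-(β₁⁻¹)) • (1 : Matrix (Fin n ⊕ Fin n) (Fin n ⊕ Fin n) ℝ)) 0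
    let I₂ : Matrix (Fin m ⊕ Fin m) ((Fin n ⊕ Fin n) ⊕ (Fin m ⊕ Fin m)) ℝ :=
      fromCols 0 ((-(β₂⁻¹)) • (1 : Matrix (Fin m ⊕ Fin m) (Fin m ⊕ Fin m) ℝ))
    let M := fromBlocks X₁ I₁ X₂ I₂
    let w : (Fin n ⊕ Fin n) ⊕ (Fin m ⊕ Fin m) → ℝ :=
      Sum.elim (Sum.elim (reV Q) (imV Q)) (Sum.elim (reV R) (imV R))
    let ΔY : (SymIdx n ⊕ SkewIdx n) ⊕
        (((Fin n × Fin m) ⊕ (Fin n × Fin m)) ⊕ ((Fin m × Fin m) ⊕ (Fin m × Fin m))) → ℝ :=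
      Sum.elim
        (Sum.elim (α₁ • (DS n *ᵥ vecS (reM (ΔE.hadamard (theta E)))))
          (α₁ • (DSK n *ᵥ vecSK (imM (ΔE.hadamard (theta E))))))
        (Sum.elim
          (Sum.elim (α₂ • vecM (reM (ΔF.hadamard (theta F))))
            (α₂ • vecM (imM (ΔF.hadamard (theta F)))))
          (Sum.elim (α₃ • vecM (reM (ΔG.hadamard (theta G))))
            (α₃ • vecM (imM (ΔG.hadamard (theta G))))))
    let ΔZ : (Fin n ⊕ Fin n) ⊕ (Fin m ⊕ Fin m) → ℝ :=
      Sum.elim (Sum.elim (β₁ • reV Δq) (β₁ • imV Δq)) (Sum.elim (β₂ • reV Δr) (β₂ • imV Δr))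
    (zeta1 α₁ α₂ α₃ β₁ β₂ (ΔE.hadamard (theta E)) (ΔF.hadamard (theta F))
        (ΔG.hadamard (theta G)) Δq Δr = eunorm (Sum.elim ΔY ΔZ)) ∧
    (((E + ΔE.hadamard (theta E)) *ᵥ uh + (F + ΔF.hadamard (theta F))ᴴ *ᵥ ph = q + Δq ∧
      (F + ΔF.hadamard (theta F)) *ᵥ uh + (G + ΔG.hadamard (theta G)) *ᵥ ph = r + Δr) ↔
      M *ᵥ Sum.elim ΔY ΔZ = w) := by
  intro Q R N₁ N₂ X₁ X₂ I₁ I₂ M w ΔY ΔZ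
  classical
  -- pattern symmetry of E
  have hθE : ∀ i j, theta E j i = theta E i j := by
    intro i j
    simp only [theta, Matrix.of_apply]
    by_cases h : E i j = 0
    · rw [if_pos h, if_pos (by rw [← hE.apply j i, h, star_zero])]
    · rw [if_neg h, if_neg (fun h2 => h (by rw [← hE.apply i j, h2, star_zero]))]
  -- hermitian-ness of the masked perturbation
  have hAH : ∀ i j, (ΔE.hadamard (theta E)) j i = star ((ΔE.hadamard (theta E)) i j) := by
    intro i j
    rw [Matrix.hadamard_apply, Matrix.hadamard_apply, ← hΔE.apply j i, hθE i j, star_mul']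
    congr 1
    simp only [theta, Matrix.of_apply]
    split_ifs <;> simp
  have hSRsym : ∀ i j, reM (ΔE.hadamard (theta E)) j i = reM (ΔE.hadamard (theta E)) i j := by
    intro i j
    simp only [reM, Matrix.map_apply]
    rw [hAH i j, Complex.star_def, Complex.conj_re]
  have hSIskew : ∀ i j, imM (ΔE.hadamard (theta E)) j i = -imM (ΔE.hadamard (theta E)) i j := by
    intro i j
    simp only [imM, Matrix.map_apply]
    rw [hAH i j, Complex.star_def, Complex.conj_im]
  -- masking facts
  have hmE : ∀ i j, E i j = 0 → (ΔE.hadamard (theta E)) i j = 0 := by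
    intro i j h; simp [Matrix.hadamard_apply, theta, h]
  have hmEre : ∀ i j, E i j = 0 → reM (ΔE.hadamard (theta E)) i j = 0 := by
    intro i j h; simp only [reM, Matrix.map_apply]; rw [hmE i j h]; exact Complex.zero_re
  have hmEim : ∀ i j, E i j = 0 → imM (ΔE.hadamard (theta E)) i j = 0 := by
    intro i j h; simp only [imM, Matrix.map_apply]; rw [hmE i j h]; exact Complex.zero_im
  have hmF : ∀ i j, F i j = 0 → (ΔF.hadamard (theta F)) i j = 0 := by
    intro i j h; simp [Matrix.hadamard_apply, theta, h]
  have hmFre : ∀ i j, F i j = 0 → reM (ΔF.hadamard (theta F)) i j = 0 := by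
    intro i j h; simp only [reM, Matrix.map_apply]; rw [hmF i j h]; exact Complex.zero_re
  have hmFim : ∀ i j, F i j = 0 → imM (ΔF.hadamard (theta F)) i j = 0 := by
    intro i j h; simp only [imM, Matrix.map_apply]; rw [hmF i j h]; exact Complex.zero_im
  have hmG : ∀ i j, G i j = 0 → (ΔG.hadamard (theta G)) i j = 0 := by
    intro i j h; simp [Matrix.hadamard_apply, theta, h]
  have hmGre : ∀ i j, G i j = 0 → reM (ΔG.hadamard (theta G)) i j = 0 := by
    intro i j h; simp only [reM, Matrix.map_apply]; rw [hmG i j h]; exact Complex.zero_re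
  have hmGim : ∀ i j, G i j = 0 → imM (ΔG.hadamard (theta G)) i j = 0 := by
    intro i j h; simp only [imM, Matrix.map_apply]; rw [hmG i j h]; exact Complex.zero_im
  have hI1 : ((-(β₁⁻¹)) • (1 : Matrix (Fin n ⊕ Fin n) (Fin n ⊕ Fin n) ℝ)) *ᵥ
      Sum.elim (β₁ • reV Δq) (β₁ • imV Δq) = -(Sum.elim (reV Δq) (imV Δq)) := by
    rw [elim_smul, red_neg β₁ hβ₁.ne' _ _ _ (Matrix.one_mulVec (Sum.elim (reV Δq) (imV Δq)))]
  have hI2 : ((-(β₂⁻¹)) • (1 : Matrix (Fin m ⊕ Fin m) (Fin m ⊕ Fin m) ℝ)) *ᵥ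
      Sum.elim (β₂ • reV Δr) (β₂ • imV Δr) = -(Sum.elim (reV Δr) (imV Δr)) := by
    rw [elim_smul, red_neg β₂ hβ₂.ne' _ _ _ (Matrix.one_mulVec (Sum.elim (reV Δr) (imV Δr)))]
  -- the linear system, computed explicitly
  have hM : M *ᵥ Sum.elim ΔY ΔZ =
      Sum.elim
        (Sum.elim
          (reM (ΔE.hadamard (theta E)) *ᵥ reV uh - imM (ΔE.hadamard (theta E)) *ᵥ imV uh +
            ((reM (ΔF.hadamard (theta F)))ᵀ *ᵥ reV ph +
              (imM (ΔF.hadamard (theta F)))ᵀ *ᵥ imV ph) - reV Δq)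
          (reM (ΔE.hadamard (theta E)) *ᵥ imV uh + imM (ΔE.hadamard (theta E)) *ᵥ reV uh +
            ((reM (ΔF.hadamard (theta F)))ᵀ *ᵥ imV ph -
              (imM (ΔF.hadamard (theta F)))ᵀ *ᵥ reV ph) - imV Δq))
        (Sum.elim
          (reM (ΔF.hadamard (theta F)) *ᵥ reV uh - imM (ΔF.hadamard (theta F)) *ᵥ imV uh +
            (reM (ΔG.hadamard (theta G)) *ᵥ reV ph -
              imM (ΔG.hadamard (theta G)) *ᵥ imV ph) - reV Δr)
          (reM (ΔF.hadamard (theta F)) *ᵥ imV uh + imM (ΔF.hadamard (theta F)) *ᵥ reV uh +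
            (reM (ΔG.hadamard (theta G)) *ᵥ imV ph +
              imM (ΔG.hadamard (theta G)) *ᵥ reV ph) - imV Δr)) := by
    unfold M X₁ X₂ I₁ I₂ N₁ N₂ ΔY ΔZ
    rw [fromBlocks_mulVec]
    simp only [Sum.elim_comp_inl, Sum.elim_comp_inr, hI1, hI2,
      fromCols_mulVec_sumElim, fromRows_mulVec, Matrix.zero_mulVec, add_zero, zero_add,
      red_pos α₁ hα₁.ne' _ _ _ (coreS E (reM (ΔE.hadamard (theta E))) hSRsym hmEre (reV uh)),
      red_pos α₁ hα₁.ne' _ _ _ (coreS E (reM (ΔE.hadamard (theta E))) hSRsym hmEre (imV uh)),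
      red_neg α₁ hα₁.ne' _ _ _ (coreK E (imM (ΔE.hadamard (theta E))) hSIskew hmEim (imV uh)),
      red_pos α₁ hα₁.ne' _ _ _ (coreK E (imM (ΔE.hadamard (theta E))) hSIskew hmEim (reV uh)),
      red_pos α₂ hα₂.ne' _ _ _ (coreFc F (reM (ΔF.hadamard (theta F))) hmFre (reV ph)),
      red_pos α₂ hα₂.ne' _ _ _ (coreFc F (reM (ΔF.hadamard (theta F))) hmFre (imV ph)),
      red_pos α₂ hα₂.ne' _ _ _ (coreFc F (imM (ΔF.hadamard (theta F))) hmFim (imV ph)),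
      red_neg α₂ hα₂.ne' _ _ _ (coreFc F (imM (ΔF.hadamard (theta F))) hmFim (reV ph)),
      red_pos α₂ hα₂.ne' _ _ _ (coreF F (reM (ΔF.hadamard (theta F))) hmFre (reV uh)),
      red_pos α₂ hα₂.ne' _ _ _ (coreF F (reM (ΔF.hadamard (theta F))) hmFre (imV uh)),
      red_neg α₂ hα₂.ne' _ _ _ (coreF F (imM (ΔF.hadamard (theta F))) hmFim (imV uh)),
      red_pos α₂ hα₂.ne' _ _ _ (coreF F (imM (ΔF.hadamard (theta F))) hmFim (reV uh)),
      red_pos α₃ hα₃.ne' _ _ _ (coreF G (reM (ΔG.hadamard (theta G))) hmGre (reV ph)),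
      red_pos α₃ hα₃.ne' _ _ _ (coreF G (reM (ΔG.hadamard (theta G))) hmGre (imV ph)),
      red_neg α₃ hα₃.ne' _ _ _ (coreF G (imM (ΔG.hadamard (theta G))) hmGim (imV ph)),
      red_pos α₃ hα₃.ne' _ _ _ (coreF G (imM (ΔG.hadamard (theta G))) hmGim (reV ph)),
      hI1, hI2]
    funext x
    rcases x with (x | x) <;> rcases x with (i | i) <;>
      simp only [Sum.elim_inl, Sum.elim_inr, Pi.add_apply, Pi.sub_apply, Pi.neg_apply,
        Pi.zero_apply] <;> ring
  constructor
  · -- part (a): the norm identity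
    unfold ΔY ΔZ
    simp only [zeta1, eunorm, frob]
    have s1 : (0:ℝ) ≤ ∑ i, ∑ j, ‖(ΔE.hadamard (theta E)) i j‖ ^ 2 := by positivity
    have s2 : (0:ℝ) ≤ ∑ i, ∑ j, ‖(ΔF.hadamard (theta F)) i j‖ ^ 2 := by positivity
    have s3 : (0:ℝ) ≤ ∑ i, ∑ j, ‖(ΔG.hadamard (theta G)) i j‖ ^ 2 := by positivity
    have s4 : (0:ℝ) ≤ ∑ i, ‖Δq i‖ ^ 2 := by positivity
    have s5 : (0:ℝ) ≤ ∑ i, ‖Δr i‖ ^ 2 := by positivity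
    rw [Real.sq_sqrt s1, Real.sq_sqrt s2, Real.sq_sqrt s3, Real.sq_sqrt s4, Real.sq_sqrt s5]
    congr 1
    simp only [Fintype.sum_sum_type, Sum.elim_inl, Sum.elim_inr, Pi.smul_apply, smul_eq_mul,
      DS, DSK, Matrix.mulVec_diagonal, Real.norm_eq_abs, sq_abs, cnormM_sq, cnormV_sq,
      Finset.sum_add_distrib]
    rw [frob_sq_symm (reM (ΔE.hadamard (theta E))) hSRsym,
      frob_sq_skew (imM (ΔE.hadamard (theta E))) hSIskew]
    simp only [vecS, vecSK, mul_pow, ← Finset.mul_sum, sum_vecM_sq]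
    ring
  · -- part (b): equivalence with the real linear system
    have h0₁ : ((E + ΔE.hadamard (theta E)) *ᵥ uh + (F + ΔF.hadamard (theta F))ᴴ *ᵥ ph =
        q + Δq) ↔
        (ΔE.hadamard (theta E) *ᵥ uh + (ΔF.hadamard (theta F))ᴴ *ᵥ ph - Δq = Q) := by
      unfold Q
      rw [Matrix.add_mulVec, Matrix.conjTranspose_add, Matrix.add_mulVec]
      constructor <;> intro h <;> linear_combination h
    have h0₂ : ((F + ΔF.hadamard (theta F)) *ᵥ uh + (G + ΔG.hadamard (theta G)) *ᵥ ph =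
        r + Δr) ↔
        (ΔF.hadamard (theta F) *ᵥ uh + ΔG.hadamard (theta G) *ᵥ ph - Δr = R) := by
      unfold R
      rw [Matrix.add_mulVec, Matrix.add_mulVec]
      constructor <;> intro h <;> linear_combination h
    rw [h0₁, h0₂, vec_eq_iff, vec_eq_iff, hM]
    unfold w
    rw [elim_eq_iff, elim_eq_iff, elim_eq_iff]
    have e1 : reV (ΔE.hadamard (theta E) *ᵥ uh + (ΔF.hadamard (theta F))ᴴ *ᵥ ph - Δq) =
        reM (ΔE.hadamard (theta E)) *ᵥ reV uh - imM (ΔE.hadamard (theta E)) *ᵥ imV uh +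
          ((reM (ΔF.hadamard (theta F)))ᵀ *ᵥ reV ph +
            (imM (ΔF.hadamard (theta F)))ᵀ *ᵥ imV ph) - reV Δq := by
      rw [reV_sub, reV_add, reV_mulVec, reV_mulVec, reM_conjTranspose, imM_conjTranspose,
        Matrix.neg_mulVec, sub_neg_eq_add]
    have e2 : imV (ΔE.hadamard (theta E) *ᵥ uh + (ΔF.hadamard (theta F))ᴴ *ᵥ ph - Δq) =
        reM (ΔE.hadamard (theta E)) *ᵥ imV uh + imM (ΔE.hadamard (theta E)) *ᵥ reV uh +
          ((reM (ΔF.hadamard (theta F)))ᵀ *ᵥ imV ph -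
            (imM (ΔF.hadamard (theta F)))ᵀ *ᵥ reV ph) - imV Δq := by
      rw [imV_sub, imV_add, imV_mulVec, imV_mulVec, reM_conjTranspose, imM_conjTranspose,
        Matrix.neg_mulVec, ← sub_eq_add_neg]
    have e3 : reV (ΔF.hadamard (theta F) *ᵥ uh + ΔG.hadamard (theta G) *ᵥ ph - Δr) =
        reM (ΔF.hadamard (theta F)) *ᵥ reV uh - imM (ΔF.hadamard (theta F)) *ᵥ imV uh +
          (reM (ΔG.hadamard (theta G)) *ᵥ reV ph -
            imM (ΔG.hadamard (theta G)) *ᵥ imV ph) - reV Δr := by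
      rw [reV_sub, reV_add, reV_mulVec, reV_mulVec]
    have e4 : imV (ΔF.hadamard (theta F) *ᵥ uh + ΔG.hadamard (theta G) *ᵥ ph - Δr) =
        reM (ΔF.hadamard (theta F)) *ᵥ imV uh + imM (ΔF.hadamard (theta F)) *ᵥ reV uh +
          (reM (ΔG.hadamard (theta G)) *ᵥ imV ph +
            imM (ΔG.hadamard (theta G)) *ᵥ reV ph) - imV Δr := by
      rw [imV_sub, imV_add, imV_mulVec, imV_mulVec]
    rw [e1, e2, e3, e4]

end GSPPBE
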